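/- Let W(y) = min_{k∈ℤ} (y − k)² and let γ > 0. For every T ∈ (0, 1), the homogenised velocity satisfies f_γ(T) = 0 if and only if T ≤ γ/(2+γ); that is, the pinning threshold for the piecewise-quadratic potential is T_γ = γ/(2+γ). -/

import Mathlib

/-- The 1-periodic piecewise-quadratic potential `W y = min_{k ∈ ℤ} (y - k) ^ 2`. -/
noncomputable def Wq (y : ℝ) : ℝ := ⨅ k : ℤ, (y - (k : ℝ)) ^ 2

/-- An orbit of the linearized minimizing-movement scheme with parameter `T` and
spatial/temporal ratio `γ`: each `y (i+1)` is a global minimizer over `ℝ` of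
`t ↦ T * t + W t + γ / 2 * (t - y i) ^ 2`. -/
def IsOrbit (W : ℝ → ℝ) (γ T : ℝ) (y : ℕ → ℝ) : Prop :=
  ∀ i : ℕ, ∀ t : ℝ,
    T * y (i + 1) + W (y (i + 1)) + γ / 2 * (y (i + 1) - y i) ^ 2 ≤
      T * t + W t + γ / 2 * (t - y i) ^ 2

/-- the one-step minimizer map -/
noncomputable def stepq (γ T y : ℝ) : ℝ :=
  (2 * (round (y - T / γ) : ℝ) + γ * y - T) / (2 + γ)

noncomputable def seqq (γ T y0 : ℝ) : ℕ → ℝ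
  | 0 => y0
  | n + 1 => stepq γ T (seqq γ T y0 n)

lemma sq_near_min {x : ℝ} {m : ℤ} (h : |x - (m : ℝ)| ≤ 1 / 2) (k : ℤ) :
    (x - (m : ℝ)) ^ 2 ≤ (x - (k : ℝ)) ^ 2 := by
  rcases eq_or_ne k m with rfl | hk
  · exact le_refl _
  · have h1 : (1 : ℝ) ≤ |(m : ℝ) - (k : ℝ)| := by
      have h0 : ((m : ℤ) - k) ≠ 0 := sub_ne_zero.2 fun h => hk h.symm
      calc (1 : ℝ) = ((1 : ℤ) : ℝ) := by norm_num
        _ ≤ ((|m - k| : ℤ) : ℝ) := by exact_mod_cast Int.one_le_abs h0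
        _ = |(m : ℝ) - (k : ℝ)| := by push_cast; rfl
    have htri : |(m : ℝ) - k| ≤ |(m:ℝ) - x| + |x - k| := abs_sub_le _ _ _
    have h2 : |x - (m : ℝ)| ≤ |x - (k : ℝ)| := by
      rw [abs_sub_comm x (m : ℝ)] at h ⊢
      linarith
    calc (x - (m:ℝ)) ^ 2 = |x - (m:ℝ)| ^ 2 := (sq_abs _).symm
      _ ≤ |x - (k:ℝ)| ^ 2 := pow_le_pow_left₀ (abs_nonneg _) h2 2
      _ = (x - (k:ℝ)) ^ 2 := sq_abs _

lemma Wq_bddBelow (t : ℝ) : BddBelow (Set.range fun k : ℤ => (t - (k : ℝ)) ^ 2) :=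
  ⟨0, Set.forall_mem_range.2 fun k => sq_nonneg _⟩

lemma Wq_eq {t : ℝ} {m : ℤ} (h : |t - (m : ℝ)| ≤ 1 / 2) : Wq t = (t - (m : ℝ)) ^ 2 := by
  refine le_antisymm (ciInf_le (Wq_bddBelow t) m) (le_ciInf fun k => sq_near_min h k)

lemma step_isMin {γ : ℝ} (hγ : 0 < γ) (T y s : ℝ) :
    T * stepq γ T y + Wq (stepq γ T y) + γ / 2 * (stepq γ T y - y) ^ 2 ≤
      T * s + Wq s + γ / 2 * (s - y) ^ 2 := by
  have hA : (0 : ℝ) < 2 + γ := by linarith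
  set x := y - T / γ with hxdef
  set m := round x with hmdef
  have hx : γ * x = γ * y - T := by rw [hxdef]; field_simp
  have ht : stepq γ T y = (2 * (m : ℝ) + γ * y - T) / (2 + γ) := rfl
  have hxm : |x - (m : ℝ)| ≤ 1 / 2 := abs_sub_round x
  have htm : |stepq γ T y - (m : ℝ)| ≤ 1 / 2 := by
    have e : stepq γ T y - (m : ℝ) = γ * (x - m) / (2 + γ) := by
      rw [ht]
      field_simp
      nlinarith [hx]
    rw [e, abs_div, abs_mul, abs_of_pos hγ, abs_of_pos hA, div_le_iff₀ hA]
    nlinarith [hxm]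
  set n := round s with hndef
  have hsn : |s - (n : ℝ)| ≤ 1 / 2 := abs_sub_round s
  rw [Wq_eq htm, Wq_eq hsn, ht]
  have hm2 : (x - (m : ℝ)) ^ 2 ≤ (x - (n : ℝ)) ^ 2 := sq_near_min hxm n
  have hm2' : (γ * y - T - γ * m) ^ 2 ≤ (γ * y - T - γ * n) ^ 2 := by
    have e1 : γ * y - T - γ * m = γ * (x - m) := by rw [mul_sub, hx]
    have e2 : γ * y - T - γ * n = γ * (x - n) := by rw [mul_sub, hx]
    rw [e1, e2, mul_pow, mul_pow]
    exact mul_le_mul_of_nonneg_left hm2 (sq_nonneg γ)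
  set t := (2 * (m : ℝ) + γ * y - T) / (2 + γ) with htdef
  have key : γ * (2 + γ) * ((T * s + (s - n) ^ 2 + γ / 2 * (s - y) ^ 2)
      - (T * t + (t - m) ^ 2 + γ / 2 * (t - y) ^ 2)) =
      γ / 2 * ((2 + γ) * s - (2 * n + γ * y - T)) ^ 2
        + ((γ * y - T - γ * n) ^ 2 - (γ * y - T - γ * m) ^ 2) := by
    rw [htdef]
    field_simp
    ring
  nlinarith [key, hm2', sq_nonneg ((2 + γ) * s - (2 * (n : ℝ) + γ * y - T)),
    mul_pos hγ hA, sq_nonneg ((2 + γ) * s - (2 * (n : ℝ) + γ * y - T))]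

lemma seqq_isOrbit {γ : ℝ} (hγ : 0 < γ) (T y0 : ℝ) : IsOrbit Wq γ T (seqq γ T y0) := by
  intro i t
  show T * stepq γ T (seqq γ T y0 i) + _ + _ ≤ _
  exact step_isMin hγ T (seqq γ T y0 i) t

theorem stmt_18 (γ : ℝ) (hγ : 0 < γ)
    -- the homogenised velocity `fγ` of the linearized scheme for the potential `Wq`
    (fγ : ℝ → ℝ)
    (hfγ : ∀ T : ℝ, ∀ y : ℕ → ℝ, IsOrbit Wq γ T y →
      Filter.Tendsto (fun i : ℕ => (y 0 - y i) / (i : ℝ)) Filter.atTop (nhds (fγ T))) :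
    ∀ T : ℝ, 0 < T → T < 1 → (fγ T = 0 ↔ T ≤ γ / (2 + γ)) := by
  intro T hT0 hT1
  have hA : (0 : ℝ) < 2 + γ := by linarith
  constructor
  · -- fγ T = 0 → T ≤ γ/(2+γ), by contraposition
    intro hf
    by_contra hTgt
    push_neg at hTgt
    have hTgt' : γ < T * (2 + γ) := by
      rw [div_lt_iff₀ hA] at hTgt; linarith
    set δ : ℝ := (T * (2 + γ) - γ) / (γ * (2 + γ)) with hδdef
    have hδpos : 0 < δ := div_pos (by linarith) (mul_pos hγ hA)
    -- drift of the explicit orbit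
    have hdrift : ∀ y : ℝ, δ ≤ y - stepq γ T y := by
      intro y
      have hr : (round (y - T / γ) : ℝ) - (y - T / γ) ≤ 1 / 2 := by
        have := abs_sub_round (y - T / γ)
        rw [abs_sub_comm] at this
        exact (abs_le.1 this).2
      have hr' : γ * ((round (y - T / γ) : ℝ) - (y - T / γ)) ≤ γ * (1 / 2) :=
        mul_le_mul_of_nonneg_left hr hγ.le
      have hy : γ * (y - T / γ) = γ * y - T := by field_simp
      have hr'' : γ * (round (y - T / γ) : ℝ) ≤ γ * y - T + γ / 2 := by nlinarith [hr']
      rw [stepq, hδdef, div_le_iff₀ (mul_pos hγ hA), sub_div' (ne_of_gt hA)]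
      rw [div_mul_eq_mul_div, le_div_iff₀ hA]
      nlinarith [hr'', hA, hγ]
    set y : ℕ → ℝ := seqq γ T 0 with hydef
    have horb : IsOrbit Wq γ T y := seqq_isOrbit hγ T 0
    have hlin : ∀ i : ℕ, (i : ℝ) * δ ≤ y 0 - y i := by
      intro i
      induction i with
      | zero => simp
      | succ k ih =>
        have h2 : δ ≤ y k - y (k + 1) := hdrift (y k)
        push_cast
        nlinarith
    have hev : ∀ᶠ i : ℕ in Filter.atTop, δ ≤ (y 0 - y i) / (i : ℝ) := by
      filter_upwards [Filter.eventually_ge_atTop 1] with i hi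
      have hi' : (0 : ℝ) < (i : ℝ) := by exact_mod_cast hi
      rw [le_div_iff₀ hi']
      nlinarith [hlin i]
    have := ge_of_tendsto (hfγ T y horb) hev
    rw [hf] at this
    linarith
  · -- T ≤ γ/(2+γ) → fγ T = 0 : constant orbit at -T/2
    intro hTle
    have hTle' : T * (2 + γ) ≤ γ := by
      rw [le_div_iff₀ hA] at hTle; linarith
    have hfix : stepq γ T (-T / 2) = -T / 2 := by
      have hx : -T / 2 - T / γ = -(T * (2 + γ)) / (2 * γ) := by field_simp; ring
      have hr : round (-T / 2 - T / γ) = 0 := by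
        rw [hx, round_eq, Int.floor_eq_zero_iff]
        constructor
        · have e : -(T * (2 + γ)) / (2 * γ) + 1 / 2 = (γ - T * (2 + γ)) / (2 * γ) := by
            field_simp; ring
          rw [e]
          exact div_nonneg (by linarith) (by positivity)
        · have hneg : -(T * (2 + γ)) / (2 * γ) < 0 :=
            div_neg_of_neg_of_pos (by nlinarith) (by positivity)
          linarith
      rw [stepq, hr]
      push_cast
      field_simp
      ring
    set y : ℕ → ℝ := seqq γ T (-T / 2) with hydef
    have hconst : ∀ i, y i = -T / 2 := by
      intro i
      induction i with
      | zero => rfl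
      | succ k ih =>
        show stepq γ T (y k) = -T / 2
        rw [ih, hfix]
    have horb : IsOrbit Wq γ T y := seqq_isOrbit hγ T (-T / 2)
    have h0 : Filter.Tendsto (fun i : ℕ => (y 0 - y i) / (i : ℝ)) Filter.atTop (nhds 0) := by
      have : (fun i : ℕ => (y 0 - y i) / (i : ℝ)) = fun _ => (0 : ℝ) := by
        funext i; rw [hconst 0, hconst i]; simp
      rw [this]
      exact tendsto_const_nhds
    exact tendsto_nhds_unique (hfγ T y horb) h0
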